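/- arXiv:1502.00357 — 6 statements merged into one kernel-verified Lean document; each statement's English description precedes it below -/
import Mathlib

section
/- Let n ≥ 2 and let f : {0,1}^n → {0,1} be a Boolean function that depends on all n of its variables. Then there exists an index i ∈ [n] and a bit b ∈ {0,1} such that the restriction f|_{x_i=b}, viewed as a Boolean function on the remaining n−1 variables, depends on all n−1 of those variables. -/
/-- `f` depends on variable `i`: flipping the `i`-th coordinate of some input changes the value. -/
def BoolDependsOn {ι : Type*} [DecidableEq ι] (f : (ι → Bool) → Bool) (i : ι) : Prop :=
  ∃ a : ι → Bool, f (Function.update a i (!a i)) ≠ f a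

/-- The restriction `f|_{x_i = b}`, a Boolean function on the remaining variables. -/
def restrictBit {ι : Type*} [DecidableEq ι] (f : (ι → Bool) → Bool) (i : ι) (b : Bool) :
    ({j : ι // j ≠ i} → Bool) → Bool :=
  fun y => f (fun j => if h : j = i then b else y ⟨j, h⟩)

lemma dep2_to_dep {n : ℕ} (f : (Fin n → Bool) → Bool) {i j : Fin n} (hj : j ≠ i) {b : Bool}
    (a : Fin n → Bool) (hai : a i = b) (hne : f (Function.update a j (!a j)) ≠ f a) :
    BoolDependsOn (restrictBit f i b) (⟨j, hj⟩ : {j : Fin n // j ≠ i}) := by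
  classical
  refine ⟨fun k => a k.val, ?_⟩
  have h1 : (fun k => if h : k = i then b else (fun k : {j : Fin n // j ≠ i} => a k.val) ⟨k, h⟩)
      = a := by
    funext k
    by_cases h : k = i
    · simp [h, hai]
    · simp [h]
  have h2 : (fun k => if h : k = i then b else
        (Function.update (fun k : {j : Fin n // j ≠ i} => a k.val) ⟨j, hj⟩
          (!(fun k : {j : Fin n // j ≠ i} => a k.val) ⟨j, hj⟩)) ⟨k, h⟩)
      = Function.update a j (!a j) := by
    funext k
    by_cases h : k = i
    · subst h
      rw [dif_pos rfl, Function.update_of_ne (Ne.symm hj), hai]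
    · rw [dif_neg h, Function.update_apply, Function.update_apply]
      by_cases hkj : k = j
      · simp [hkj]
      · have : (⟨k, h⟩ : {j : Fin n // j ≠ i}) ≠ ⟨j, hj⟩ := by
          simpa [Subtype.ext_iff] using hkj
        simp [hkj, this]
  show f _ ≠ f _
  rw [h1, h2]
  exact hne

/-- If `f` depends on all `n ≥ 2` of its variables, then for some `i` and bit `b`, the
restriction `f|_{x_i = b}` depends on all the remaining `n - 1` variables. -/
theorem exists_nondegenerate_restriction (n : ℕ) (hn : 2 ≤ n)
    (f : (Fin n → Bool) → Bool) (hf : ∀ i : Fin n, BoolDependsOn f i) :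
    ∃ (i : Fin n) (b : Bool),
      ∀ j : {j : Fin n // j ≠ i}, BoolDependsOn (restrictBit f i b) j := by
  classical
  by_contra hcon
  push_neg at hcon
  -- D i b : set of variables (≠ i) on which the restriction x_i := b depends
  set D : Fin n → Bool → Finset (Fin n) := fun i b =>
    Finset.univ.filter (fun j => j ≠ i ∧
      ∃ a : Fin n → Bool, a i = b ∧ f (Function.update a j (!a j)) ≠ f a) with hD
  have hnpos : 0 < n := by omega
  obtain ⟨⟨i, b⟩, -, hmax⟩ := Finset.exists_max_image (Finset.univ : Finset (Fin n × Bool))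
    (fun p => (D p.1 p.2).card) ⟨(⟨0, hnpos⟩, false), Finset.mem_univ _⟩
  obtain ⟨⟨j, hji⟩, hjdep⟩ := hcon i b
  have hjD : j ∉ D i b := by
    intro hmem
    rw [hD, Finset.mem_filter] at hmem
    obtain ⟨-, -, a, hai, hne⟩ := hmem
    exact hjdep (dep2_to_dep f hji a hai hne)
  have huseless : ∀ a : Fin n → Bool, a i = b → f (Function.update a j (!a j)) = f a := by
    intro a ha
    by_contra hne
    exact hjD (by rw [hD]; exact Finset.mem_filter.2 ⟨Finset.mem_univ _, hji, a, ha, hne⟩)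
  obtain ⟨a₀, ha₀⟩ := hf i
  obtain ⟨c, hc⟩ : ∃ c : Bool, a₀ j = c := ⟨a₀ j, rfl⟩
  have hsub : insert i (D i b) ⊆ D j c := by
    intro k hk
    rcases Finset.mem_insert.1 hk with rfl | hk
    · rw [hD]
      exact Finset.mem_filter.2 ⟨Finset.mem_univ _, Ne.symm hji, a₀, hc, ha₀⟩
    · rw [hD, Finset.mem_filter] at hk
      obtain ⟨-, hki, p, hp, hpk⟩ := hk
      have hkj : k ≠ j := by
        rintro rfl
        exact hjD (by rw [hD]; exact Finset.mem_filter.2 ⟨Finset.mem_univ _, hki, p, hp, hpk⟩)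
      rw [hD]
      refine Finset.mem_filter.2 ⟨Finset.mem_univ _, hkj, ?_⟩
      by_cases hpj : p j = c
      · exact ⟨p, hpj, hpk⟩
      · have hpj2 : (!(p j)) = c := by cases hb : p j <;> cases c <;> simp_all
        refine ⟨Function.update p j (!p j), ?_, ?_⟩
        · rw [Function.update_self]; exact hpj2
        · have e1 : f (Function.update p j (!p j)) = f p := huseless p hp
          have hq : (Function.update p j (!p j)) k = p k := Function.update_of_ne hkj _ _
          have e2 : Function.update (Function.update p j (!p j)) k
                (!(Function.update p j (!p j)) k)
              = Function.update (Function.update p k (!p k)) j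
                (!(Function.update p k (!p k)) j) := by
            rw [hq, Function.update_of_ne (Ne.symm hkj)]
            exact (Function.update_comm hkj _ _ p).symm
          have hupki : (Function.update p k (!p k)) i = b := by
            rw [Function.update_of_ne (Ne.symm hki)]; exact hp
          have e3 : f (Function.update (Function.update p k (!p k)) j
                (!(Function.update p k (!p k)) j)) = f (Function.update p k (!p k)) :=
            huseless _ hupki
          rw [e2, e3, e1]
          exact hpk
  have hiD : i ∉ D i b := by
    intro hmem
    rw [hD, Finset.mem_filter] at hmem
    exact hmem.2.1 rfl
  have h1 : (D i b).card + 1 ≤ (D j c).card := by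
    rw [← Finset.card_insert_of_notMem hiD]
    exact Finset.card_le_card hsub
  have h2 : (D j c).card ≤ (D i b).card := hmax (j, c) (Finset.mem_univ _)
  omega
end

section
/- Let f : {0,1}^n → {0,1} be a Boolean function that depends on all n of its variables, and let k be an integer with 0 < k ≤ n. Then there exists a set I ⊆ [n] with |I| = n − k and an assignment ρ : I → {0,1} such that the subfunction f|_ρ, obtained by fixing each variable x_i with i ∈ I to the value ρ(i), depends on all k of the remaining free variables. -/
/-- `f` depends on variable `i`: flipping the `i`-th coordinate of some input changes the value. -/
def BoolFunDependsOn {ι : Type*} [DecidableEq ι] (f : (ι → Bool) → Bool) (i : ι) : Prop :=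
  ∃ a : ι → Bool, f (Function.update a i (!a i)) ≠ f a

/-- The subfunction `f|_ρ` obtained by fixing each variable `x_i` with `i ∈ I` to `ρ i`,
as a Boolean function on the free variables indexed by `[n] \ I`. -/
def restrictSet {n : ℕ} (f : (Fin n → Bool) → Bool) (I : Finset (Fin n)) (ρ : Fin n → Bool) :
    ({j : Fin n // j ∉ I} → Bool) → Bool :=
  fun y => f (fun j => if h : j ∈ I then ρ j else y ⟨j, h⟩)

section Aux
attribute [local instance] Classical.propDecidable

private def flip1 {n : ℕ} (a : Fin n → Bool) (l : Fin n) : Fin n → Bool :=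
  Function.update a l (!a l)

private lemma flip1_apply_ne {n : ℕ} (a : Fin n → Bool) {l j : Fin n} (h : j ≠ l) :
    flip1 a l j = a j := Function.update_of_ne h _ _

private lemma flip1_apply_self {n : ℕ} (a : Fin n → Bool) (l : Fin n) :
    flip1 a l l = !a l := Function.update_self _ _ _

private lemma flip1_comm {n : ℕ} (a : Fin n → Bool) {l j : Fin n} (h : l ≠ j) :
    flip1 (flip1 a l) j = flip1 (flip1 a j) l := by
  unfold flip1
  rw [Function.update_of_ne h.symm, Function.update_of_ne h, Function.update_comm h]

/-- the subfunction of `f` obtained by fixing `I` according to `ρ` depends on variable `l`. -/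
private def DS {n : ℕ} (f : (Fin n → Bool) → Bool) (I : Finset (Fin n)) (ρ : Fin n → Bool)
    (l : Fin n) : Prop :=
  ∃ a : Fin n → Bool, (∀ i ∈ I, a i = ρ i) ∧ f (flip1 a l) ≠ f a

private lemma step {n : ℕ} (f : (Fin n → Bool) → Bool) (I : Finset (Fin n)) (ρ : Fin n → Bool)
    (hall : ∀ l ∉ I, DS f I ρ l) (hne : I ≠ Finset.univ) :
    ∃ i ∉ I, ∃ b : Bool, ∀ l ∉ insert i I, DS f (insert i I) (Function.update ρ i b) l := by
  set S : Fin n → Bool → Finset (Fin n) := fun i b =>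
    (Finset.univ \ insert i I).filter (DS f (insert i I) (Function.update ρ i b)) with hS
  have hT : ((Finset.univ \ I) ×ˢ (Finset.univ : Finset Bool)).Nonempty := by
    obtain ⟨i0, hi0⟩ : ∃ i, i ∉ I := by
      by_contra h
      push_neg at h
      exact hne (Finset.eq_univ_iff_forall.2 fun x => h x)
    exact ⟨(i0, false), by simp [hi0]⟩
  obtain ⟨⟨i, b⟩, hmem, hmax⟩ :=
    Finset.exists_max_image _ (fun p : Fin n × Bool => (S p.1 p.2).card) hT
  have hi : i ∉ I := by
    have := (Finset.mem_product.1 hmem).1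
    simpa using this
  refine ⟨i, hi, b, ?_⟩
  intro j hj
  by_contra hDS
  have hjI : j ∉ I := fun h => hj (Finset.mem_insert_of_mem h)
  have hji : j ≠ i := fun h => hj (h ▸ Finset.mem_insert_self j I)
  -- the key: since the (i,b)-subfunction ignores j, flipping j preserves f on matching inputs
  have hflip : ∀ a : Fin n → Bool, (∀ i' ∈ insert i I, a i' = Function.update ρ i b i') →
      f (flip1 a j) = f a := by
    intro a ha
    by_contra h
    exact hDS ⟨a, ha, h⟩
  -- choose c from a witness of dependence on i
  obtain ⟨a0, ha0, ha0f⟩ := hall i hi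
  set c := a0 j with hc
  -- claim 1 : the (j,c)-subfunction depends on i
  have claim1 : DS f (insert j I) (Function.update ρ j c) i := by
    refine ⟨a0, ?_, ha0f⟩
    intro i' hi'
    rcases Finset.mem_insert.1 hi' with h | h
    · subst h; simp [hc]
    · rw [Function.update_of_ne (by rintro rfl; exact hjI h), ha0 i' h]
  -- claim 2 : the (j,c)-subfunction depends on every variable the (i,b)-subfunction depends on
  have claim2 : ∀ l ∈ S i b, DS f (insert j I) (Function.update ρ j c) l := by
    intro l hl
    rw [hS, Finset.mem_filter] at hl
    obtain ⟨hlmem, a, ha, haf⟩ := hl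
    have hlins : l ∉ insert i I := (Finset.mem_sdiff.1 hlmem).2
    have hlI : l ∉ I := fun h => hlins (Finset.mem_insert_of_mem h)
    have hlj : l ≠ j := by
      intro e; subst e; exact hDS ⟨a, ha, haf⟩
    have key : ∀ a' : Fin n → Bool, a' j = c → (∀ i' ∈ I, a' i' = ρ i') →
        f (flip1 a' l) ≠ f a' → DS f (insert j I) (Function.update ρ j c) l := by
      intro a' h1 h2 h3
      refine ⟨a', ?_, h3⟩
      intro i' hi'
      rcases Finset.mem_insert.1 hi' with h | h
      · subst h; simpa using h1
      · rw [Function.update_of_ne (by rintro rfl; exact hjI h), h2 i' h]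
    have haI : ∀ i' ∈ I, a i' = ρ i' := by
      intro i' hi'
      have := ha i' (Finset.mem_insert_of_mem hi')
      rwa [Function.update_of_ne (by rintro rfl; exact hi hi')] at this
    by_cases haj : a j = c
    · exact key a haj haI haf
    · -- flip j on a; f is preserved by hflip
      have hajc : (!a j) = c := by
        revert haj; cases a j <;> cases c <;> simp
      have e1 : f (flip1 a j) = f a := hflip a ha
      have e2 : f (flip1 (flip1 a l) j) = f (flip1 a l) := by
        refine hflip (flip1 a l) ?_
        intro i' hi'
        rw [flip1_apply_ne a (by rintro rfl; exact hlins hi')]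
        exact ha i' hi'
      refine key (flip1 a j) (by rw [flip1_apply_self]; exact hajc) ?_ ?_
      · intro i' hi'
        rw [flip1_apply_ne a (by rintro rfl; exact hjI hi')]
        exact haI i' hi'
      · rw [flip1_comm a (Ne.symm hlj), e2, e1]
        exact haf
  -- now S j c is strictly bigger than S i b, contradiction with maximality
  have hsub : insert i (S i b) ⊆ S j c := by
    intro l hl
    rcases Finset.mem_insert.1 hl with h | h
    · subst h
      rw [hS, Finset.mem_filter, Finset.mem_sdiff]
      exact ⟨⟨Finset.mem_univ _, fun h => (Finset.mem_insert.1 h).elim (fun e => hji e.symm) hi⟩, claim1⟩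
    · rw [hS, Finset.mem_filter, Finset.mem_sdiff]
      have hlmem := (Finset.mem_filter.1 h).1
      have hlins : l ∉ insert i I := (Finset.mem_sdiff.1 hlmem).2
      have hlI : l ∉ I := fun hh => hlins (Finset.mem_insert_of_mem hh)
      have hlj : l ≠ j := by
        intro e; subst e; exact hDS (Finset.mem_filter.1 h).2
      exact ⟨⟨Finset.mem_univ _, fun hh => (Finset.mem_insert.1 hh).elim hlj hlI⟩, claim2 l h⟩
  have hinotin : i ∉ S i b := by
    rw [hS]
    intro h
    exact (Finset.mem_sdiff.1 (Finset.mem_filter.1 h).1).2 (Finset.mem_insert_self i I)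
  have h1 : (S i b).card + 1 ≤ (S j c).card := by
    calc (S i b).card + 1 = (insert i (S i b)).card := (Finset.card_insert_of_notMem hinotin).symm
    _ ≤ (S j c).card := Finset.card_le_card hsub
  have h2 : (S j c).card ≤ (S i b).card := by
    have : (j, c) ∈ (Finset.univ \ I) ×ˢ (Finset.univ : Finset Bool) := by simp [hjI]
    exact hmax (j, c) this
  omega

private lemma aux {n : ℕ} (f : (Fin n → Bool) → Bool) (hf : ∀ i, BoolFunDependsOn f i) :
    ∀ d, d ≤ n → ∃ (I : Finset (Fin n)) (ρ : Fin n → Bool), I.card = d ∧ ∀ l ∉ I, DS f I ρ l := by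
  intro d
  induction d with
  | zero =>
    intro _
    refine ⟨∅, fun _ => false, rfl, fun l _ => ?_⟩
    obtain ⟨a, ha⟩ := hf l
    exact ⟨a, fun i h => absurd h (Finset.notMem_empty i), ha⟩
  | succ d ih =>
    intro hd
    obtain ⟨I, ρ, hcard, hall⟩ := ih (Nat.le_of_succ_le hd)
    have hne : I ≠ Finset.univ := by
      intro h
      rw [h, Finset.card_univ, Fintype.card_fin] at hcard
      omega
    obtain ⟨i, hi, b, h⟩ := step f I ρ hall hne
    exact ⟨insert i I, Function.update ρ i b, by rw [Finset.card_insert_of_notMem hi, hcard], h⟩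

end Aux

/-- If `f` depends on all `n` variables and `0 < k ≤ n`, then there is a restriction fixing
`n - k` variables whose subfunction depends on all `k` free variables. -/
theorem exists_nondegenerate_subfunction (n k : ℕ) (hk : 0 < k) (hkn : k ≤ n)
    (f : (Fin n → Bool) → Bool) (hf : ∀ i : Fin n, BoolFunDependsOn f i) :
    ∃ (I : Finset (Fin n)) (ρ : Fin n → Bool), I.card = n - k ∧
      ∀ j : {j : Fin n // j ∉ I}, BoolFunDependsOn (restrictSet f I ρ) j := by
  obtain ⟨I, ρ, hcard, hall⟩ := aux f hf (n - k) (Nat.sub_le n k)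
  refine ⟨I, ρ, hcard, ?_⟩
  rintro ⟨l, hl⟩
  obtain ⟨a, ha, haf⟩ := hall l hl
  refine ⟨fun j => a j, ?_⟩
  have h1 : restrictSet f I ρ (fun j : {j : Fin n // j ∉ I} => a j) = f a := by
    unfold restrictSet
    congr 1
    funext j
    by_cases h : j ∈ I
    · simp [h, ha j h]
    · simp [h]
  have h2 : restrictSet f I ρ
      (Function.update (fun j : {j : Fin n // j ∉ I} => a j) ⟨l, hl⟩
        (!(fun j : {j : Fin n // j ∉ I} => a j) ⟨l, hl⟩)) = f (flip1 a l) := by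
    unfold restrictSet
    congr 1
    funext j
    by_cases h : j ∈ I
    · have hjl : j ≠ l := fun e => hl (e ▸ h)
      simp only [h, dif_pos]
      rw [flip1_apply_ne a hjl, ha j h]
    · simp only [h, dif_neg, not_false_iff]
      by_cases hjl : j = l
      · subst hjl
        have : (⟨j, h⟩ : {j : Fin n // j ∉ I}) = ⟨j, hl⟩ := rfl
        rw [this, Function.update_self, flip1_apply_self]
      · rw [Function.update_of_ne (fun e => hjl (congrArg Subtype.val e)),
          flip1_apply_ne a hjl]
  rw [h2, h1]
  exact haf
end

section
/- Let m = Π_{i=1}^{r} p_i^{e_i} be a positive integer, where p_1, …, p_r are distinct primes and e_1, …, e_r are positive integers. For an integer k ≥ 1, let L_k = Π_{i=1}^{r} p_i^{e_i + ⌊log_{p_i} k⌋}. Then for all nonnegative integers s and j, the binomial coefficients satisfy C(s·L_k + j, k) ≡ C(j, k) (mod m). -/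
open Finset

lemma sum_modeq' {α : Type*} (s : Finset α) (f g : α → ℕ) (n : ℕ)
    (h : ∀ a ∈ s, f a ≡ g a [MOD n]) :
    (∑ a ∈ s, f a) ≡ ∑ a ∈ s, g a [MOD n] := by
  classical
  induction s using Finset.induction with
  | empty => rfl
  | insert _ _ hx ih =>
    rw [Finset.sum_insert hx, Finset.sum_insert hx]
    exact (h _ (Finset.mem_insert_self _ _)).add
      (ih fun a ha => h a (Finset.mem_insert_of_mem ha))

lemma pow_dvd_choose_pp {p e k t : ℕ} (hp : p.Prime) (he : 1 ≤ e) (hk : 1 ≤ k)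
    (ht : 1 ≤ t) (htk : t ≤ k) :
    p ^ e ∣ (p ^ (e + Nat.log p k)).choose t := by
  set c := e + Nat.log p k with hc
  have htc : t ≤ p ^ c := by
    have h1 : k < p ^ (Nat.log p k + 1) := Nat.lt_pow_succ_log_self hp.one_lt k
    have h2 : p ^ (Nat.log p k + 1) ≤ p ^ c := Nat.pow_le_pow_right hp.pos (by omega)
    omega
  have ht0 : t ≠ 0 := by omega
  have hCpos : 0 < (p ^ c).choose t := Nat.choose_pos htc
  have hem := Nat.Prime.emultiplicity_choose_prime_pow hp htc ht0
  have hfin : FiniteMultiplicity p ((p ^ c).choose t) :=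
    Nat.finiteMultiplicity_iff.2 ⟨hp.ne_one, hCpos⟩
  rw [hfin.emultiplicity_eq_multiplicity] at hem
  have hmC : multiplicity p ((p ^ c).choose t) = c - multiplicity p t := by
    exact_mod_cast hem
  have hmt : multiplicity p t ≤ Nat.log p k := by
    have h1 : multiplicity p t = t.factorization p := Nat.multiplicity_eq_factorization hp ht0
    have h2 : p ^ t.factorization p ≤ t := Nat.ordProj_le p ht0
    have h3 : t.factorization p ≤ Nat.log p t :=
      (Nat.le_log_iff_pow_le hp.one_lt ht0).2 h2
    exact h1 ▸ h3.trans (Nat.log_mono_right htk)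
  have hle : e ≤ multiplicity p ((p ^ c).choose t) := by omega
  exact (Nat.Prime.pow_dvd_iff_le_factorization hp hCpos.ne').2
    (by rw [← Nat.multiplicity_eq_factorization hp hCpos.ne']; exact hle)

lemma step_pp {p e k : ℕ} (hp : p.Prime) (he : 1 ≤ e) (hk : 1 ≤ k) (j : ℕ) :
    (p ^ (e + Nat.log p k) + j).choose k ≡ j.choose k [MOD p ^ e] := by
  set n := p ^ (e + Nat.log p k) with hn
  rw [Nat.add_choose_eq]
  have hsum : ∑ ij ∈ antidiagonal k,
      (if ij.1 = 0 then j.choose k else 0) = j.choose k := by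
    rw [Finset.sum_eq_single_of_mem ((0 : ℕ), k)]
    · simp
    · simp [Finset.mem_antidiagonal]
    · rintro ⟨a, b⟩ hab hne
      simp only [Finset.HasAntidiagonal.mem_antidiagonal] at hab
      have : a ≠ 0 := by rintro rfl; exact hne (by simp [← hab])
      simp [this]
  calc ∑ ij ∈ antidiagonal k, n.choose ij.1 * j.choose ij.2
      ≡ ∑ ij ∈ antidiagonal k, (if ij.1 = 0 then j.choose k else 0) [MOD p ^ e] := by
        apply sum_modeq'
        rintro ⟨a, b⟩ hab
        simp only [Finset.HasAntidiagonal.mem_antidiagonal] at hab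
        by_cases ha : a = 0
        · subst ha; simp at hab ⊢; subst hab; rfl
        · have hdvd : p ^ e ∣ n.choose a * j.choose b :=
            Dvd.dvd.mul_right (pow_dvd_choose_pp hp he hk (by omega) (by omega)) _
          simpa [ha] using (Nat.modEq_zero_iff_dvd).2 hdvd
    _ = j.choose k := hsum

lemma many_pp {p e k : ℕ} (hp : p.Prime) (he : 1 ≤ e) (hk : 1 ≤ k) :
    ∀ a j : ℕ, (a * p ^ (e + Nat.log p k) + j).choose k ≡ j.choose k [MOD p ^ e] := by
  intro a
  induction a with
  | zero => intro j; rw [Nat.zero_mul, Nat.zero_add]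
  | succ a ih =>
    intro j
    have : (a + 1) * p ^ (e + Nat.log p k) + j
        = p ^ (e + Nat.log p k) + (a * p ^ (e + Nat.log p k) + j) := by ring
    rw [this]
    exact (step_pp hp he hk _).trans (ih j)

/-- Let `m = Π_{i} p_i^{e_i}` with `p_i` distinct primes and `e_i ≥ 1`, and for `k ≥ 1` let
`L_k = Π_i p_i^{e_i + ⌊log_{p_i} k⌋}`. Then `C(s·L_k + j, k) ≡ C(j, k) (mod m)` for all
nonnegative integers `s, j`. -/
theorem choose_periodic_mod (r : ℕ) (p e : Fin r → ℕ)
    (hp : ∀ i, (p i).Prime) (hpd : Function.Injective p) (he : ∀ i, 0 < e i)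
    (m : ℕ) (hm : m = ∏ i, p i ^ e i)
    (k : ℕ) (hk : 1 ≤ k)
    (L : ℕ) (hL : L = ∏ i, p i ^ (e i + Nat.log (p i) k)) :
    ∀ s j : ℕ, (s * L + j).choose k ≡ j.choose k [MOD m] := by
  intro s j
  -- it suffices to prove it modulo each p i ^ e i
  have key : ∀ i, (s * L + j).choose k ≡ j.choose k [MOD p i ^ e i] := by
    intro i
    have hdvd : p i ^ (e i + Nat.log (p i) k) ∣ L := hL ▸ Finset.dvd_prod_of_mem _ (by simp)
    obtain ⟨c, hc⟩ := hdvd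
    have : s * L + j = (s * c) * p i ^ (e i + Nat.log (p i) k) + j := by rw [hc]; ring
    rw [this]
    exact many_pp (hp i) (he i) hk (s * c) j
  rw [hm]
  have hcop : Set.Pairwise (↑(Finset.univ : Finset (Fin r)))
      (Function.onFun IsCoprime fun i => ((p i : ℤ) ^ e i)) := by
    intro i _ i' _ hne
    simp only [Function.onFun]
    have : Nat.Coprime (p i ^ e i) (p i' ^ e i') :=
      ((Nat.coprime_primes (hp i) (hp i')).2 fun h => hne (hpd h)).pow _ _
    have := Nat.isCoprime_iff_coprime.2 this
    push_cast at this
    exact this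
  have hdvd : ∀ i ∈ Finset.univ, ((p i : ℤ) ^ e i) ∣
      ((j.choose k : ℤ) - ((s * L + j).choose k : ℤ)) := by
    intro i _
    exact_mod_cast (Nat.modEq_iff_dvd.mp (key i))
  have hprod : ((∏ i, p i ^ e i : ℕ) : ℤ) ∣
      ((j.choose k : ℤ) - ((s * L + j).choose k : ℤ)) := by
    push_cast
    exact Finset.prod_dvd_of_coprime hcop hdvd
  have := Nat.modEq_iff_dvd.mpr hprod
  exact this
end

section
/- Let p_1, …, p_r be distinct primes, e_1, …, e_r positive integers, and m = Π_{i=1}^{r} p_i^{e_i} with m > 2, all fixed. For a Boolean function f : {0,1}^n → {0,1}, let d_{p_i^{e_i}}(f) denote its exact representing degree over ℤ_{p_i^{e_i}}. Then the fraction of functions f : {0,1}^n → {0,1} (out of all 2^{2^n} such functions) satisfying m · d_{p_1^{e_1}}(f) ⋯ d_{p_r^{e_r}}(f) > log₂ n − 1 tends to 1 as n → ∞. -/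
/-- `P` is multilinear: every variable has individual degree at most 1 in every monomial. -/
def Multilinear {n q : ℕ} (P : MvPolynomial (Fin n) (ZMod q)) : Prop :=
  ∀ d ∈ P.support, ∀ i, d i ≤ 1

/-- `P` represents `f` over `ℤ_q`: they agree on all 0/1 inputs. -/
def Represents {n q : ℕ} (P : MvPolynomial (Fin n) (ZMod q))
    (f : (Fin n → Bool) → Bool) : Prop :=
  ∀ x : Fin n → Bool,
    MvPolynomial.eval (fun i => if x i then (1 : ZMod q) else 0) P = if f x then 1 else 0

/-- `d` is the exact representing degree of `f` over `ℤ_q`: the (unique) multilinear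
polynomial representing `f` over `ℤ_q` has total degree `d`. -/
def RepDegree (q : ℕ) {n : ℕ} (f : (Fin n → Bool) → Bool) (d : ℕ) : Prop :=
  ∃ P : MvPolynomial (Fin n) (ZMod q), Multilinear P ∧ Represents P f ∧ P.totalDegree = d

lemma aux_eq_C_of_tdzero {n q : ℕ} (P : MvPolynomial (Fin n) (ZMod q))
    (h : P.totalDegree = 0) : P = MvPolynomial.C (MvPolynomial.coeff 0 P) := by
  apply MvPolynomial.ext
  intro d
  by_cases hd : d = 0
  · subst hd; simp [MvPolynomial.coeff_C]
  · rw [MvPolynomial.coeff_C, if_neg (Ne.symm hd)]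
    by_contra hc
    have hmem : d ∈ P.support := MvPolynomial.mem_support_iff.mpr hc
    have := (MvPolynomial.totalDegree_eq_zero_iff _ P).mp h d hmem
    exact hd (Finsupp.ext this)

lemma aux_const {n q : ℕ} (hq : 2 ≤ q) (f : (Fin n → Bool) → Bool)
    (h : RepDegree q f 0) : ∀ x, f x = f (fun _ => false) := by
  haveI : Fact (1 < q) := ⟨hq⟩
  obtain ⟨P, -, hrep, hdeg⟩ := h
  have hC := aux_eq_C_of_tdzero P hdeg
  intro x
  have h1 := hrep x
  have h2 := hrep (fun _ => false)
  rw [hC, MvPolynomial.eval_C] at h1 h2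
  have : (if f x then (1 : ZMod q) else 0) = if f (fun _ => false) then 1 else 0 := by
    rw [← h1, ← h2]
  cases hfx : f x <;> cases hf0 : f (fun _ => false)
  · rfl
  · rw [hfx, hf0] at this; simp at this
  · rw [hfx, hf0] at this; simp at this
  · rfl

lemma aux_count_lowdeg (n q D : ℕ) (hq : 2 ≤ q) :
    Nat.card {f : (Fin n → Bool) → Bool //
        ∃ P : MvPolynomial (Fin n) (ZMod q), Multilinear P ∧ Represents P f ∧ P.totalDegree ≤ D}
      ≤ q ^ Fintype.card {T : Finset (Fin n) // T.card ≤ D} := by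
  classical
  haveI : Fact (1 < q) := ⟨hq⟩
  haveI : NeZero q := ⟨by omega⟩
  set S := {f : (Fin n → Bool) → Bool //
      ∃ P : MvPolynomial (Fin n) (ZMod q), Multilinear P ∧ Represents P f ∧ P.totalDegree ≤ D}
  let F : S → ({T : Finset (Fin n) // T.card ≤ D} → ZMod q) := fun f T =>
    MvPolynomial.coeff (Finsupp.indicator T.1 fun _ _ => 1) f.2.choose
  have hinj : Function.Injective F := by
    intro f g hfg
    obtain ⟨hfm, hfr, hfd⟩ := f.2.choose_spec
    obtain ⟨hgm, hgr, hgd⟩ := g.2.choose_spec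
    have hPQ : f.2.choose = g.2.choose := by
      apply MvPolynomial.ext
      intro d
      by_cases h1 : ∀ i, d i ≤ 1
      · by_cases h2 : d.support.card ≤ D
        · have hd : d = Finsupp.indicator d.support (fun _ _ => 1) := by
            ext i
            rw [Finsupp.indicator_apply]
            split
            · next hi => have h0 := Finsupp.mem_support_iff.mp hi
                         have := h1 i; omega
            · next hi => exact Finsupp.notMem_support_iff.mp hi
          have := congrFun hfg ⟨d.support, h2⟩
          simpa [F, ← hd] using this
        · have hsum : ∀ (P : MvPolynomial (Fin n) (ZMod q)), P.totalDegree ≤ D →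
              MvPolynomial.coeff d P = 0 := by
            intro P hP
            apply MvPolynomial.coeff_eq_zero_of_totalDegree_lt
            have : d.support.card ≤ ∑ i ∈ d.support, d i := by
              calc d.support.card = ∑ _i ∈ d.support, 1 := by simp
              _ ≤ ∑ i ∈ d.support, d i :=
                Finset.sum_le_sum fun i hi => Nat.one_le_iff_ne_zero.mpr
                  (Finsupp.mem_support_iff.mp hi)
            omega
          rw [hsum _ hfd, hsum _ hgd]
      · push_neg at h1
        obtain ⟨i, hi⟩ := h1
        have hz : ∀ (P : MvPolynomial (Fin n) (ZMod q)), Multilinear P →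
            MvPolynomial.coeff d P = 0 := by
          intro P hP
          by_contra hc
          exact absurd (hP d (MvPolynomial.mem_support_iff.mpr hc) i) (by omega)
        rw [hz _ hfm, hz _ hgm]
    apply Subtype.ext
    funext x
    have h1 := hfr x
    have h2 := hgr x
    rw [hPQ, h2] at h1
    cases hfx : f.1 x <;> cases hgx : g.1 x
    · rfl
    · rw [hfx, hgx] at h1; simp at h1
    · rw [hfx, hgx] at h1; simp at h1
    · rfl
  calc Nat.card S ≤ Nat.card ({T : Finset (Fin n) // T.card ≤ D} → ZMod q) :=
        Nat.card_le_card_of_injective F hinj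
  _ = q ^ Fintype.card {T : Finset (Fin n) // T.card ≤ D} := by
        rw [Nat.card_eq_fintype_card, Fintype.card_fun, ZMod.card]

lemma aux_geom (b D : ℕ) (hb : 2 ≤ b) : ∑ j ∈ Finset.range (D + 1), b ^ j ≤ b ^ (D + 1) := by
  induction D with
  | zero => simp only [zero_add, Finset.range_one, Finset.sum_singleton, pow_zero, pow_one]; omega
  | succ D ih =>
    rw [Finset.sum_range_succ]
    calc ∑ j ∈ Finset.range (D + 1), b ^ j + b ^ (D + 1)
        ≤ b ^ (D + 1) + b ^ (D + 1) := by omega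
      _ = b ^ (D + 1) * 2 := by ring
      _ ≤ b ^ (D + 1) * b := Nat.mul_le_mul_left _ hb
      _ = b ^ (D + 1 + 1) := by ring

lemma aux_card_small_finsets (n D : ℕ) (hn : 1 ≤ n) :
    Fintype.card {T : Finset (Fin n) // T.card ≤ D} ≤ (n + 1) ^ (D + 1) := by
  classical
  rw [Fintype.card_subtype]
  have hsub : (Finset.univ.filter fun T : Finset (Fin n) => T.card ≤ D)
      ⊆ (Finset.range (D + 1)).biUnion (fun j => Finset.powersetCard j Finset.univ) := by
    intro T hT
    simp only [Finset.mem_filter, Finset.mem_univ, true_and] at hT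
    simp only [Finset.mem_biUnion, Finset.mem_range, Finset.mem_powersetCard]
    exact ⟨T.card, by omega, Finset.subset_univ T, rfl⟩
  calc (Finset.univ.filter fun T : Finset (Fin n) => T.card ≤ D).card
      ≤ ((Finset.range (D + 1)).biUnion fun j => Finset.powersetCard j Finset.univ).card :=
        Finset.card_le_card hsub
    _ ≤ ∑ j ∈ Finset.range (D + 1), (Finset.powersetCard j (Finset.univ : Finset (Fin n))).card :=
        Finset.card_biUnion_le
    _ ≤ ∑ j ∈ Finset.range (D + 1), (n + 1) ^ j := by
        apply Finset.sum_le_sum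
        intro j _
        rw [Finset.card_powersetCard, Finset.card_univ, Fintype.card_fin]
        exact le_trans (Nat.choose_le_pow n j) (Nat.pow_le_pow_left (by omega) j)
    _ ≤ (n + 1) ^ (D + 1) := aux_geom _ _ (by omega)

lemma aux_count_const (n : ℕ) :
    Nat.card {f : (Fin n → Bool) → Bool // ∀ x, f x = f (fun _ => false)} ≤ 2 := by
  have hinj : Function.Injective
      (fun f : {f : (Fin n → Bool) → Bool // ∀ x, f x = f (fun _ => false)} =>
        f.1 (fun _ => false)) := by
    intro f g h
    apply Subtype.ext
    funext x
    rw [f.2 x, g.2 x]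
    exact h
  simpa using Nat.card_le_card_of_injective _ hinj

open Filter in
lemma aux_eventually (C : ℕ) :
    ∀ᶠ n : ℕ in Filter.atTop, C + (Nat.log 2 n + 1) ^ 2 + 1 ≤ n := by
  have hl2 : (0:ℝ) < Real.log 2 := Real.log_pos (by norm_num)
  have hlog := Real.tendsto_pow_log_div_mul_add_atTop 1 0 2 one_ne_zero
  simp only [one_mul, add_zero] at hlog
  have hev1 : ∀ᶠ x : ℝ in atTop, Real.log x ^ 2 / x < Real.log 2 ^ 2 / 8 :=
    hlog.eventually (gt_mem_nhds (by positivity))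
  have hev : ∀ᶠ x : ℝ in atTop, (C:ℝ) + (Real.logb 2 x + 1) ^ 2 + 1 ≤ x := by
    filter_upwards [hev1, eventually_ge_atTop (1:ℝ), eventually_ge_atTop ((4:ℝ)*(C+3))]
      with x h1 h2 h3
    have hx0 : (0:ℝ) < x := by linarith
    have h4 : Real.log x ^ 2 < Real.log 2 ^ 2 / 8 * x := (div_lt_iff₀ hx0).mp h1
    have hlb : Real.logb 2 x = Real.log x / Real.log 2 := rfl
    have h5 : Real.logb 2 x ^ 2 ≤ x / 8 := by
      rw [hlb, div_pow, div_le_div_iff₀ (by positivity) (by norm_num)]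
      nlinarith
    nlinarith [sq_nonneg (Real.logb 2 x - 1)]
  have hevn : ∀ᶠ n : ℕ in atTop, (C:ℝ) + (Real.logb 2 (n:ℝ) + 1) ^ 2 + 1 ≤ (n:ℝ) :=
    tendsto_natCast_atTop_atTop.eventually hev
  filter_upwards [hevn, eventually_ge_atTop 1] with n hn hn1
  have hL : (Nat.log 2 n : ℝ) ≤ Real.logb 2 (n:ℝ) := by
    have := Real.natLog_le_logb n 2
    push_cast at this
    exact this
  have hLnn : (0:ℝ) ≤ (Nat.log 2 n : ℝ) := by positivity
  have hsq : ((Nat.log 2 n : ℝ) + 1) ^ 2 ≤ (Real.logb 2 (n:ℝ) + 1) ^ 2 := by nlinarith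
  have hfin : ((C + (Nat.log 2 n + 1) ^ 2 + 1 : ℕ) : ℝ) ≤ (n:ℝ) := by push_cast; nlinarith
  exact_mod_cast hfin

lemma aux_card_or {α : Type*} [Finite α] (P A B : α → Prop) (h : ∀ x, P x → A x ∨ B x) :
    Nat.card {x // P x} ≤ Nat.card {x // A x} + Nat.card {x // B x} := by
  classical
  cases nonempty_fintype α
  simp only [Nat.card_eq_fintype_card, Fintype.card_subtype]
  calc (Finset.univ.filter P).card
      ≤ (Finset.univ.filter A ∪ Finset.univ.filter B).card := by
        apply Finset.card_le_card
        intro x hx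
        simp only [Finset.mem_filter, Finset.mem_univ, true_and, Finset.mem_union] at *
        exact h x hx
    _ ≤ _ := Finset.card_union_le _ _

lemma aux_np : ∀ n : ℕ, 3 ≤ n → n + 1 ≤ 2 ^ (n - 1) := by
  intro n hn
  induction n with
  | zero => omega
  | succ k ih =>
    rcases Nat.lt_or_ge k 3 with h | h
    · interval_cases k <;> first | omega | norm_num
    · have hk := ih (by omega)
      have h1 : 1 ≤ 2 ^ (k - 1) := Nat.one_le_two_pow
      have h2 : k + 1 - 1 = (k - 1) + 1 := by omega
      rw [h2, pow_succ]
      omega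


open Filter

/-- For fixed `m = Π p_i^{e_i} > 2` with the `p_i` distinct primes, the fraction of Boolean
functions `f : {0,1}^n → {0,1}` satisfying
`m · d_{p_1^{e_1}}(f) ⋯ d_{p_r^{e_r}}(f) > log₂ n - 1` tends to `1` as `n → ∞`. -/
theorem almost_all_degree_product_lower_bound (r : ℕ) (p e : Fin r → ℕ)
    (hp : ∀ i, (p i).Prime) (hpd : Function.Injective p) (he : ∀ i, 0 < e i)
    (m : ℕ) (hm : m = ∏ i, p i ^ e i) (hm2 : 2 < m) :
    Filter.Tendsto (fun n : ℕ =>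
      (Nat.card {f : (Fin n → Bool) → Bool //
          ∀ d : Fin r → ℕ, (∀ i, RepDegree (p i ^ e i) f (d i)) →
            Real.logb 2 n - 1 < (m : ℝ) * ∏ i, (d i : ℝ)} : ℝ) / 2 ^ (2 ^ n))
      Filter.atTop (nhds 1) := by
  classical
  have hr : 0 < r := by
    rcases Nat.eq_zero_or_pos r with h0 | h
    · subst h0; simp at hm; omega
    · exact h
  set i₀ : Fin r := ⟨0, hr⟩ with hi₀
  set q : ℕ := p i₀ ^ e i₀ with hq_def
  have hq2 : 2 ≤ q := le_trans (hp i₀).two_le (Nat.le_self_pow (he i₀).ne' _)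
  set Good : (n : ℕ) → ((Fin n → Bool) → Bool) → Prop := fun n f =>
    ∀ d : Fin r → ℕ, (∀ i, RepDegree (p i ^ e i) f (d i)) →
      Real.logb 2 n - 1 < (m : ℝ) * ∏ i, (d i : ℝ) with hGood_def
  set B : ℕ → ℕ := fun n => Nat.card {f : (Fin n → Bool) → Bool // ¬ Good n f} with hB_def
  have htotal : ∀ n, Nat.card {f : (Fin n → Bool) → Bool // Good n f} = 2 ^ 2 ^ n - B n
      ∧ B n ≤ 2 ^ 2 ^ n := by
    intro n
    have hcard : Fintype.card ((Fin n → Bool) → Bool) = 2 ^ 2 ^ n := by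
      simp [Fintype.card_fun]
    have h1 : B n = 2 ^ 2 ^ n - Nat.card {f : (Fin n → Bool) → Bool // Good n f} := by
      rw [show B n = Nat.card {f : (Fin n → Bool) → Bool // ¬ Good n f} from rfl]
      rw [Nat.card_eq_fintype_card, Nat.card_eq_fintype_card,
        Fintype.card_subtype_compl, hcard]
    have h2 : Nat.card {f : (Fin n → Bool) → Bool // Good n f} ≤ 2 ^ 2 ^ n := by
      rw [Nat.card_eq_fintype_card, ← hcard]
      exact Fintype.card_subtype_le _
    omega
  have hBbound : ∀ᶠ n in atTop, B n * 2 ^ n ≤ 2 ^ 2 ^ n := by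
    filter_upwards [aux_eventually q, eventually_ge_atTop 3] with n hA hB3
    have hn1 : 1 ≤ n := by omega
    have hn0 : n ≠ 0 := by omega
    set L := Nat.log 2 n with hL
    have hcase : ∀ f : (Fin n → Bool) → Bool, ¬ Good n f →
        (∀ x, f x = f (fun _ => false)) ∨
        (∃ P : MvPolynomial (Fin n) (ZMod q), Multilinear P ∧ Represents P f ∧
          P.totalDegree ≤ L) := by
      intro f hf
      simp only [hGood_def, not_forall, Classical.not_imp, not_lt] at hf
      obtain ⟨d, hd, hle⟩ := hf
      by_cases hz : ∃ j, d j = 0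
      · left
        obtain ⟨j, hj⟩ := hz
        have hqj : 2 ≤ p j ^ e j := le_trans (hp j).two_le (Nat.le_self_pow (he j).ne' _)
        exact aux_const hqj f (hj ▸ hd j)
      · right
        push_neg at hz
        have hones : ∀ i, 1 ≤ d i := fun i => Nat.one_le_iff_ne_zero.mpr (hz i)
        have hprod : d i₀ ≤ m * ∏ i, d i := by
          have h1 : d i₀ ≤ ∏ i, d i :=
            Finset.single_le_prod' (fun i _ => hones i) (Finset.mem_univ i₀)
          calc d i₀ ≤ ∏ i, d i := h1
            _ ≤ m * ∏ i, d i := Nat.le_mul_of_pos_left _ (by omega)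
        have hreal : (d i₀ : ℝ) ≤ Real.logb 2 n := by
          have hc : ((m * ∏ i, d i : ℕ) : ℝ) = (m : ℝ) * ∏ i, (d i : ℝ) := by push_cast; rfl
          have h2 : (d i₀ : ℝ) ≤ (m : ℝ) * ∏ i, (d i : ℝ) := by
            rw [← hc]; exact_mod_cast hprod
          linarith
        have hpow : (2 : ℝ) ^ (d i₀) ≤ (n : ℝ) := by
          have hn0' : (0 : ℝ) < n := by exact_mod_cast hn1
          calc (2 : ℝ) ^ (d i₀) = (2 : ℝ) ^ ((d i₀ : ℝ)) := (Real.rpow_natCast 2 _).symm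
            _ ≤ (2 : ℝ) ^ (Real.logb 2 n) :=
              (Real.rpow_le_rpow_left_iff one_lt_two).mpr hreal
            _ = n := Real.rpow_logb (by norm_num) (by norm_num) hn0'
        have hpown : 2 ^ (d i₀) ≤ n := by exact_mod_cast hpow
        have hdL : d i₀ ≤ L := (Nat.le_log_iff_pow_le one_lt_two hn0).mpr hpown
        obtain ⟨P, h1, h2, h3⟩ := hd i₀
        exact ⟨P, h1, h2, le_trans (le_of_eq h3) hdL⟩
    have hcount : B n ≤ 2 + q ^ ((n + 1) ^ (L + 1)) := by
      have hle1 : B n ≤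
          Nat.card {f : (Fin n → Bool) → Bool // ∀ x, f x = f (fun _ => false)} +
          Nat.card {f : (Fin n → Bool) → Bool //
            ∃ P : MvPolynomial (Fin n) (ZMod q), Multilinear P ∧ Represents P f ∧
              P.totalDegree ≤ L} :=
        aux_card_or _ _ _ hcase
      have h2 := aux_count_const n
      have h3 : Nat.card {f : (Fin n → Bool) → Bool //
            ∃ P : MvPolynomial (Fin n) (ZMod q), Multilinear P ∧ Represents P f ∧
              P.totalDegree ≤ L} ≤ q ^ ((n + 1) ^ (L + 1)) :=
        le_trans (aux_count_lowdeg n q L hq2)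
          (Nat.pow_le_pow_right (le_trans one_le_two hq2) (aux_card_small_finsets n L hn1))
      exact le_trans hle1 (Nat.add_le_add h2 h3)
    have hq2n : q ≤ 2 ^ q := Nat.le_of_lt (Nat.lt_two_pow_self (n := q))
    have hn2 : n + 1 ≤ 2 ^ (L + 1) := Nat.lt_pow_succ_log_self one_lt_two n
    have e1 : (n + 1) ^ (L + 1) ≤ 2 ^ ((L + 1) ^ 2) := by
      calc (n + 1) ^ (L + 1) ≤ (2 ^ (L + 1)) ^ (L + 1) := Nat.pow_le_pow_left hn2 _
        _ = 2 ^ ((L + 1) ^ 2) := by rw [← pow_mul, pow_two]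
    have e2 : q ^ ((n + 1) ^ (L + 1)) ≤ 2 ^ 2 ^ (q + (L + 1) ^ 2) := by
      calc q ^ ((n + 1) ^ (L + 1)) ≤ (2 ^ q) ^ ((n + 1) ^ (L + 1)) :=
            Nat.pow_le_pow_left hq2n _
        _ = 2 ^ (q * (n + 1) ^ (L + 1)) := by rw [← pow_mul]
        _ ≤ 2 ^ (2 ^ q * 2 ^ ((L + 1) ^ 2)) :=
            Nat.pow_le_pow_right (by omega) (Nat.mul_le_mul hq2n e1)
        _ = 2 ^ 2 ^ (q + (L + 1) ^ 2) := by rw [← pow_add]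
    set K := q + (L + 1) ^ 2 with hK_def
    have hK : K + 1 ≤ n := hA
    have hfold : B n ≤ 2 ^ (2 ^ K + 1) := by
      have h1 : 1 ≤ 2 ^ K := Nat.one_le_two_pow
      have h2 : 2 ≤ 2 ^ 2 ^ K := by
        calc 2 = 2 ^ 1 := rfl
          _ ≤ 2 ^ 2 ^ K := Nat.pow_le_pow_right (by omega) h1
      have h3 : 2 ^ (2 ^ K + 1) = 2 ^ 2 ^ K * 2 := pow_succ 2 _
      omega
    have hnp : n + 1 ≤ 2 ^ (n - 1) := aux_np n hB3
    have hKexp : 2 ^ K ≤ 2 ^ (n - 1) := Nat.pow_le_pow_right (by omega) (by omega)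
    calc B n * 2 ^ n ≤ 2 ^ (2 ^ K + 1) * 2 ^ n := Nat.mul_le_mul_right _ hfold
      _ = 2 ^ (2 ^ K + 1 + n) := by rw [← pow_add]
      _ ≤ 2 ^ 2 ^ n := by
          apply Nat.pow_le_pow_right (by omega)
          have h2n : 2 ^ n = 2 ^ (n - 1) + 2 ^ (n - 1) := by
            have hh : n - 1 + 1 = n := by omega
            calc 2 ^ n = 2 ^ (n - 1 + 1) := by rw [hh]
              _ = 2 ^ (n - 1) * 2 := pow_succ 2 _
              _ = 2 ^ (n - 1) + 2 ^ (n - 1) := by ring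
          omega
  have hR : Tendsto (fun n => (B n : ℝ) / 2 ^ 2 ^ n) atTop (nhds 0) := by
    apply tendsto_of_tendsto_of_tendsto_of_le_of_le' tendsto_const_nhds
      (tendsto_pow_atTop_nhds_zero_of_lt_one (by norm_num : (0:ℝ) ≤ 1/2) (by norm_num))
    · filter_upwards with n
      positivity
    · filter_upwards [hBbound] with n hn
      have hpos : (0 : ℝ) < 2 ^ 2 ^ n := by positivity
      have h2 : (0 : ℝ) < 2 ^ n := by positivity
      rw [div_le_iff₀ hpos]
      have hcast : ((B n : ℝ)) * 2 ^ n ≤ 2 ^ 2 ^ n := by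
        have := (Nat.cast_le (α := ℝ)).mpr hn
        push_cast at this
        exact this
      have heq : (1 / 2 : ℝ) ^ n * 2 ^ 2 ^ n = 2 ^ 2 ^ n / 2 ^ n := by
        rw [div_pow, one_pow]
        ring
      rw [heq, le_div_iff₀ h2]
      exact hcast
  have hGoodcard : ∀ n : ℕ,
      (Nat.card {f : (Fin n → Bool) → Bool // Good n f} : ℝ) / 2 ^ 2 ^ n
        = 1 - (B n : ℝ) / 2 ^ 2 ^ n := by
    intro n
    obtain ⟨hg, hb⟩ := htotal n
    rw [hg, Nat.cast_sub hb]
    push_cast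
    rw [sub_div, div_self (by positivity)]
  have hfinal : Tendsto (fun n : ℕ => 1 - (B n : ℝ) / 2 ^ 2 ^ n) atTop (nhds 1) := by
    have h1 : Tendsto (fun _ : ℕ => (1 : ℝ)) atTop (nhds 1) := tendsto_const_nhds
    simpa using h1.sub hR
  refine hfinal.congr ?_
  intro n
  exact (hGoodcard n).symm
end

section
/- Let p_1, …, p_r be distinct primes, e_1, …, e_r positive integers, and m = Π_{i=1}^{r} p_i^{e_i} with m > 2, all fixed; let M = max_{i∈[r]} p_i^{e_i}. For a Boolean function f : {0,1}^n → {0,1}, let d_max(f) = max_{i∈[r]} d_{p_i^{e_i}}(f), where d_{p_i^{e_i}}(f) is the exact representing degree of f over ℤ_{p_i^{e_i}}. Then the fraction of functions f : {0,1}^n → {0,1} (out of all 2^{2^n} such functions) satisfying d_max(f) > (log₂ n − 1)^{1/r} / M tends to 1 as n → ∞. -/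
/-- the multilinear monomial exponent vector of a finset -/
noncomputable def monoOf {n : ℕ} (s : Finset (Fin n)) : Fin n →₀ ℕ :=
  Finsupp.indicator s (fun _ _ => 1)

lemma monoOf_support_eq {n : ℕ} (d : Fin n →₀ ℕ) (hd : ∀ i, d i ≤ 1) :
    monoOf d.support = d := by
  ext i
  by_cases h : i ∈ d.support
  · have h1 : d i ≠ 0 := Finsupp.mem_support_iff.mp h
    have := hd i
    simp [monoOf, Finsupp.indicator_apply, h]
    omega
  · have h1 : d i = 0 := Finsupp.notMem_support_iff.mp h
    simp [monoOf, Finsupp.indicator_apply, h, h1]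

lemma card_finset_card_le (n ℓ : ℕ) :
    Fintype.card {s : Finset (Fin n) // s.card ≤ ℓ} ≤ (n + 1) ^ (ℓ + 1) := by
  have : Fintype.card (Fin (ℓ+1) → Option (Fin n)) = (n+1)^(ℓ+1) := by simp
  rw [← this]
  apply Fintype.card_le_of_injective
    (fun s => fun j : Fin (ℓ+1) => (Finset.sort s.1 (· ≤ ·))[(j:ℕ)]?)
  rintro ⟨s, hs⟩ ⟨t, ht⟩ h
  have hls : (Finset.sort s (· ≤ ·)).length = s.card := Finset.length_sort _
  have hlt : (Finset.sort t (· ≤ ·)).length = t.card := Finset.length_sort _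
  have hst : Finset.sort s (· ≤ ·) = Finset.sort t (· ≤ ·) := by
    apply List.ext_getElem?
    intro i
    by_cases hi : i < ℓ + 1
    · exact congrFun h ⟨i, hi⟩
    · rw [List.getElem?_eq_none (by omega), List.getElem?_eq_none (by omega)]
  have := congrArg List.toFinset hst
  rw [Finset.sort_toFinset, Finset.sort_toFinset] at this
  exact Subtype.ext this

lemma card_low_degree_le (n ℓ q : ℕ) (hq : 2 ≤ q) :
    Nat.card {f : (Fin n → Bool) → Bool //
      ∃ P : MvPolynomial (Fin n) (ZMod q), Multilinear P ∧ Represents P f ∧ P.totalDegree ≤ ℓ}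
      ≤ q ^ ((n + 1) ^ (ℓ + 1)) := by
  haveI : NeZero q := ⟨by omega⟩
  haveI : Fact (1 < q) := ⟨by omega⟩
  set T := {f : (Fin n → Bool) → Bool //
      ∃ P : MvPolynomial (Fin n) (ZMod q), Multilinear P ∧ Represents P f ∧ P.totalDegree ≤ ℓ}
  have key : Nat.card T ≤ Nat.card ({s : Finset (Fin n) // s.card ≤ ℓ} → ZMod q) := by
    apply Nat.card_le_card_of_injective
      (fun f => fun s => (f.2.choose).coeff (monoOf s.1))
    intro a b hab
    obtain ⟨hPa1, hPa2, hPa3⟩ := a.2.choose_spec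
    obtain ⟨hPb1, hPb2, hPb3⟩ := b.2.choose_spec
    set P := a.2.choose
    set Q := b.2.choose
    have hPQ : P = Q := by
      apply MvPolynomial.ext
      intro d
      by_cases hmul : ∀ i, d i ≤ 1
      · by_cases hdeg : (d.sum fun _ e => e) ≤ ℓ
        · have hcard : d.support.card ≤ ℓ := by
            refine le_trans ?_ hdeg
            rw [Finset.card_eq_sum_ones, Finsupp.sum]
            exact Finset.sum_le_sum fun i hi => by
              have := Finsupp.mem_support_iff.mp hi; omega
          have := congrFun hab ⟨d.support, hcard⟩
          simpa [monoOf_support_eq d hmul] using this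
        · have h1 : d ∉ P.support := fun h => hdeg (MvPolynomial.le_totalDegree h |>.trans hPa3)
          have h2 : d ∉ Q.support := fun h => hdeg (MvPolynomial.le_totalDegree h |>.trans hPb3)
          rw [MvPolynomial.notMem_support_iff.mp h1, MvPolynomial.notMem_support_iff.mp h2]
      · push_neg at hmul
        obtain ⟨i, hi⟩ := hmul
        have h1 : d ∉ P.support := fun h => by have := hPa1 d h i; omega
        have h2 : d ∉ Q.support := fun h => by have := hPb1 d h i; omega
        rw [MvPolynomial.notMem_support_iff.mp h1, MvPolynomial.notMem_support_iff.mp h2]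
    apply Subtype.ext
    funext x
    have h1 := hPa2 x
    have h2 := hPb2 x
    rw [hPQ] at h1
    rw [h1] at h2
    by_cases ha : a.1 x <;> by_cases hb : b.1 x <;> simp_all
  refine key.trans ?_
  rw [Nat.card_eq_fintype_card, Fintype.card_fun, ZMod.card]
  exact Nat.pow_le_pow_right (by omega) (card_finset_card_le n ℓ)

lemma sq_add_two_le_two_pow : ∀ a : ℕ, 8 ≤ a → (a + 2) ^ 2 ≤ 2 ^ a := by
  intro a ha
  induction a, ha using Nat.le_induction with
  | base => norm_num
  | succ a ha ih =>
    have : (a + 1 + 2) ^ 2 ≤ 2 * (a + 2) ^ 2 := by nlinarith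
    calc (a + 1 + 2) ^ 2 ≤ 2 * (a + 2) ^ 2 := this
    _ ≤ 2 * 2 ^ a := by omega
    _ = 2 ^ (a + 1) := by ring

/-- For fixed `m = Π p_i^{e_i} > 2` with the `p_i` distinct primes and
`M = max_i p_i^{e_i}`, the fraction of Boolean functions `f : {0,1}^n → {0,1}` satisfying
`max_i d_{p_i^{e_i}}(f) > (log₂ n - 1)^{1/r} / M` tends to `1` as `n → ∞`. -/
theorem almost_all_max_degree_lower_bound (r : ℕ) (p e : Fin r → ℕ)
    (hp : ∀ i, (p i).Prime) (hpd : Function.Injective p) (he : ∀ i, 0 < e i)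
    (m : ℕ) (hm : m = ∏ i, p i ^ e i) (hm2 : 2 < m)
    (M : ℕ) (hM : M = Finset.univ.sup (fun i : Fin r => p i ^ e i)) :
    Filter.Tendsto (fun n : ℕ =>
      (Nat.card {f : (Fin n → Bool) → Bool //
          ∀ d : Fin r → ℕ, (∀ i, RepDegree (p i ^ e i) f (d i)) →
            (Real.logb 2 n - 1) ^ ((1 : ℝ) / r) / (M : ℝ)
              < ((Finset.univ.sup d : ℕ) : ℝ)} : ℝ) / 2 ^ (2 ^ n))
      Filter.atTop (nhds 1) := by
  classical
  have hr : 0 < r := by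
    rcases Nat.eq_zero_or_pos r with h | h
    · subst h; simp at hm; omega
    · exact h
  set i0 : Fin r := ⟨0, hr⟩
  set q : ℕ := p i0 ^ e i0 with hq
  have hq2 : 2 ≤ q := by
    calc 2 ≤ p i0 := (hp i0).two_le
    _ = p i0 ^ 1 := (pow_one _).symm
    _ ≤ q := Nat.pow_le_pow_right (hp i0).pos (he i0)
  have hqM : q ≤ M := by
    rw [hM]; exact Finset.le_sup (f := fun i : Fin r => p i ^ e i) (Finset.mem_univ i0)
  -- abbreviations
  set Pr : ∀ n : ℕ, ((Fin n → Bool) → Bool) → Prop := fun n f =>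
    ∀ d : Fin r → ℕ, (∀ i, RepDegree (p i ^ e i) f (d i)) →
      (Real.logb 2 n - 1) ^ ((1 : ℝ) / r) / (M : ℝ) < ((Finset.univ.sup d : ℕ) : ℝ)
    with hPr
  set g : ℕ → ℝ := fun n =>
    (Nat.card {f : (Fin n → Bool) → Bool // ¬ Pr n f} : ℝ) / 2 ^ (2 ^ n) with hg
  -- total count
  have htot : ∀ n : ℕ, Nat.card {f : (Fin n → Bool) → Bool // Pr n f}
      + Nat.card {f : (Fin n → Bool) → Bool // ¬ Pr n f} = 2 ^ (2 ^ n) := by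
    intro n
    calc Nat.card {f : (Fin n → Bool) → Bool // Pr n f}
        + Nat.card {f : (Fin n → Bool) → Bool // ¬ Pr n f}
        = Nat.card ({f : (Fin n → Bool) → Bool // Pr n f}
            ⊕ {f : (Fin n → Bool) → Bool // ¬ Pr n f}) := (Nat.card_sum).symm
      _ = Nat.card ((Fin n → Bool) → Bool) := Nat.card_congr (Equiv.sumCompl _)
      _ = 2 ^ 2 ^ n := by simp [Nat.card_eq_fintype_card]
  -- the bad-count bound, eventually
  have hbound : ∀ n : ℕ, 2 ^ max 8 q ≤ n →
      (Nat.card {f : (Fin n → Bool) → Bool // ¬ Pr n f}) * 2 ^ n ≤ 2 ^ 2 ^ n := by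
    intro n hn
    have hn0 : n ≠ 0 := by
      have : 0 < n := lt_of_lt_of_le (pow_pos (by norm_num) _) hn
      omega
    set ℓ : ℕ := Nat.log 2 n with hℓ
    have hℓA : max 8 q ≤ ℓ := (Nat.le_log_iff_pow_le (by norm_num) hn0).mpr hn
    have hℓn : 2 ^ ℓ ≤ n := Nat.pow_log_le_self 2 hn0
    have hn4 : 256 ≤ n := le_trans (by calc (256:ℕ) = 2^8 := by norm_num
      _ ≤ 2 ^ max 8 q := Nat.pow_le_pow_right (by norm_num) (le_max_left _ _)) hn
    -- real log bound
    have hnR : (256 : ℝ) ≤ (n : ℝ) := by exact_mod_cast hn4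
    have hL : (2 : ℝ) ≤ Real.logb 2 n := by
      rw [Real.le_logb_iff_rpow_le (by norm_num) (by positivity)]
      have h44 : (2 : ℝ) ^ (2 : ℝ) = (2:ℝ) ^ (2:ℕ) := by
        rw [← Real.rpow_natCast]; norm_num
      rw [h44]; norm_num; linarith
    -- degree bound for bad functions
    have hstep : Nat.card {f : (Fin n → Bool) → Bool // ¬ Pr n f} ≤
        Nat.card {f : (Fin n → Bool) → Bool //
          ∃ P : MvPolynomial (Fin n) (ZMod q), Multilinear P ∧ Represents P f
            ∧ P.totalDegree ≤ ℓ} := by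
      apply Nat.card_le_card_of_injective (fun f => ⟨f.1, by
        obtain ⟨f, hf⟩ := f
        simp only [hPr, not_forall, Classical.not_imp, not_lt] at hf
        obtain ⟨d, hd, hsup⟩ := hf
        obtain ⟨P, hP1, hP2, hP3⟩ := hd i0
        refine ⟨P, hP1, hP2, ?_⟩
        rw [hP3]
        -- real chain
        have h1 : ((d i0 : ℕ) : ℝ) ≤ ((Finset.univ.sup d : ℕ) : ℝ) := by
          exact_mod_cast Nat.cast_le.mpr (Finset.le_sup (Finset.mem_univ i0))
        have hM1 : (1 : ℝ) ≤ (M : ℝ) := by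
          have : (1:ℕ) ≤ M := by omega
          exact_mod_cast this
        have hbase : (1 : ℝ) ≤ Real.logb 2 n - 1 := by linarith
        have h2 : (Real.logb 2 n - 1) ^ ((1 : ℝ) / r) / (M : ℝ)
            ≤ Real.logb 2 n := by
          have hx : (0:ℝ) ≤ (Real.logb 2 n - 1) ^ ((1 : ℝ) / r) :=
            Real.rpow_nonneg (by linarith) _
          have h3 : (Real.logb 2 n - 1) ^ ((1 : ℝ) / r) ≤ Real.logb 2 n - 1 := by
            have h1r : (1 : ℝ) / r ≤ 1 := by
              rw [div_le_one (by exact_mod_cast hr)]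
              exact_mod_cast hr
            have := Real.rpow_le_rpow_of_exponent_le hbase h1r
            rwa [Real.rpow_one] at this
          calc (Real.logb 2 n - 1) ^ ((1 : ℝ) / r) / (M : ℝ)
              ≤ (Real.logb 2 n - 1) ^ ((1 : ℝ) / r) := div_le_self hx hM1
            _ ≤ Real.logb 2 n - 1 := h3
            _ ≤ Real.logb 2 n := by linarith
        have hchain : ((d i0 : ℕ) : ℝ) ≤ Real.logb 2 n := le_trans (le_trans h1 hsup) h2
        -- to Nat.log
        have h4 : ((d i0 : ℕ) : ℤ) ≤ ⌊Real.logb 2 (n : ℝ)⌋ :=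
          Int.le_floor.mpr (by exact_mod_cast hchain)
        rw [show (2:ℝ) = ((2:ℕ):ℝ) by norm_num, Real.floor_logb_natCast (Nat.cast_nonneg n),
          Int.log_natCast] at h4
        exact_mod_cast h4⟩)
      intro a b hab
      simp only [Subtype.mk.injEq] at hab
      exact Subtype.ext hab
    have hstep2 := (hstep.trans (card_low_degree_le n ℓ q hq2))
    -- nat arithmetic
    set E : ℕ := (n + 1) ^ (ℓ + 1) with hE
    have hq2p : q ≤ 2 ^ q := (Nat.lt_two_pow_self (n := q)).le
    have hE2 : E ≤ 2 ^ ((ℓ + 1) * (ℓ + 1)) := by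
      have hn1 : n + 1 ≤ 2 ^ (ℓ + 1) := (Nat.lt_pow_succ_log_self (by norm_num) n)
      calc E ≤ (2 ^ (ℓ + 1)) ^ (ℓ + 1) := Nat.pow_le_pow_left hn1 _
        _ = 2 ^ ((ℓ + 1) * (ℓ + 1)) := by rw [← pow_mul]
    have hqE : q * E ≤ 2 ^ (q + (ℓ + 1) * (ℓ + 1)) := by
      calc q * E ≤ 2 ^ q * 2 ^ ((ℓ + 1) * (ℓ + 1)) := Nat.mul_le_mul hq2p hE2
        _ = 2 ^ (q + (ℓ + 1) * (ℓ + 1)) := by rw [← pow_add]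
    have hc : q + (ℓ + 1) * (ℓ + 1) + 1 ≤ n := by
      have h5 : (ℓ + 2) ^ 2 ≤ 2 ^ ℓ := sq_add_two_le_two_pow ℓ (le_trans (le_max_left _ _) hℓA)
      have hqℓ : q ≤ ℓ := le_trans (le_max_right _ _) hℓA
      have hsq : (ℓ + 2) ^ 2 = ℓ * ℓ + 4 * ℓ + 4 := by ring
      have hsq2 : (ℓ + 1) * (ℓ + 1) = ℓ * ℓ + 2 * ℓ + 1 := by ring
      omega
    have hfin : q * E + n ≤ 2 ^ n := by
      have h6 : 2 ^ (q + (ℓ + 1) * (ℓ + 1)) ≤ 2 ^ (n - 1) :=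
        Nat.pow_le_pow_right (by norm_num) (by omega)
      have h7 : n ≤ 2 ^ (n - 1) := by
        have := Nat.lt_two_pow_self (n := n - 1); omega
      have h8 : 2 ^ n = 2 ^ (n - 1) * 2 := by
        have heq : n - 1 + 1 = n := by omega
        rw [← pow_succ, heq]
      omega
    calc (Nat.card {f : (Fin n → Bool) → Bool // ¬ Pr n f}) * 2 ^ n
        ≤ q ^ E * 2 ^ n := Nat.mul_le_mul_right _ hstep2
      _ ≤ (2 ^ q) ^ E * 2 ^ n := Nat.mul_le_mul_right _ (Nat.pow_le_pow_left hq2p E)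
      _ = 2 ^ (q * E + n) := by rw [← pow_mul, ← pow_add]
      _ ≤ 2 ^ 2 ^ n := Nat.pow_le_pow_right (by norm_num) hfin
  -- g → 0
  have hg0 : Filter.Tendsto g Filter.atTop (nhds 0) := by
    apply tendsto_of_tendsto_of_tendsto_of_le_of_le' tendsto_const_nhds
      (tendsto_pow_atTop_nhds_zero_of_lt_one (by norm_num : (0:ℝ) ≤ 1/2) (by norm_num))
    · exact Filter.Eventually.of_forall fun n => by positivity
    · rw [Filter.eventually_atTop]
      refine ⟨2 ^ max 8 q, fun n hn => ?_⟩
      have h := hbound n hn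
      rw [hg]
      rw [div_le_iff₀ (by positivity)]
      have heq : ((1:ℝ)/2) ^ n * 2 ^ (2 ^ n) = 2 ^ (2 ^ n) / 2 ^ n := by
        rw [div_pow]; ring
      rw [heq, le_div_iff₀ (by positivity)]
      exact_mod_cast h
  -- conclude
  have hfeq : ∀ n : ℕ, (Nat.card {f : (Fin n → Bool) → Bool // Pr n f} : ℝ) / 2 ^ (2 ^ n)
      = 1 - g n := by
    intro n
    have h := htot n
    have h2 : (Nat.card {f : (Fin n → Bool) → Bool // Pr n f} : ℝ)
        = 2 ^ (2 ^ n) - (Nat.card {f : (Fin n → Bool) → Bool // ¬ Pr n f} : ℝ) := by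
      have hcast := congrArg (fun k : ℕ => (k : ℝ)) h
      push_cast at hcast
      linarith
    rw [hg, h2, sub_div, div_self (by positivity : ((2:ℝ) ^ 2 ^ n) ≠ 0)]
  have : Filter.Tendsto (fun n => 1 - g n) Filter.atTop (nhds 1) := by
    have := Filter.Tendsto.sub
      (tendsto_const_nhds : Filter.Tendsto (fun _ : ℕ => (1:ℝ)) Filter.atTop (nhds 1)) hg0
    simpa using this
  exact this.congr fun n => (hfeq n).symm
end

section
/- Let p and q be fixed distinct primes. For a Boolean function f : {0,1}^n → {0,1}, let d_p(f) and d_q(f) denote its exact representing degrees over ℤ_p and ℤ_q respectively. Then the fraction of functions f : {0,1}^n → {0,1} (out of all 2^{2^n} such functions) satisfying p · q · d_p(f) · d_q(f) > log₂ n − 1 tends to 1 as n → ∞; in particular, d_p(f) · d_q(f) = Ω(log n) almost always. -/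
/-- Indicator monomial exponent vector of a finset. -/
private noncomputable def indF {n : ℕ} (S : Finset (Fin n)) : Fin n →₀ ℕ :=
  Finsupp.equivFunOnFinite.symm (fun i => if i ∈ S then 1 else 0)

private lemma indF_apply {n : ℕ} (S : Finset (Fin n)) (i : Fin n) :
    indF S i = if i ∈ S then 1 else 0 :=
  congrFun (Finsupp.coe_equivFunOnFinite_symm _) i

/-- A polynomial represents at most one boolean function. -/
private lemma represents_inj {n p : ℕ} (hp : 1 < p) {P : MvPolynomial (Fin n) (ZMod p)}
    {f g : (Fin n → Bool) → Bool} (hf : Represents P f) (hg : Represents P g) : f = g := by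
  haveI : Fact (1 < p) := ⟨hp⟩
  funext x
  have h := (hf x).symm.trans (hg x)
  cases hfx : f x <;> cases hgx : g x <;> rw [hfx, hgx] at h <;> simp at h

/-- Two multilinear polynomials of total degree at most `D` agreeing on all
indicator monomials of sets of size at most `D` are equal. -/
private lemma multilinear_ext {n p D : ℕ} {P Q : MvPolynomial (Fin n) (ZMod p)}
    (hPm : Multilinear P) (hQm : Multilinear Q)
    (hPd : P.totalDegree ≤ D) (hQd : Q.totalDegree ≤ D)
    (h : ∀ S : Finset (Fin n), S.card ≤ D →
      MvPolynomial.coeff (indF S) P = MvPolynomial.coeff (indF S) Q) : P = Q := by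
  have main : ∀ d : Fin n →₀ ℕ, (∀ i, d i ≤ 1) → (d.sum fun _ e => e) ≤ D →
      MvPolynomial.coeff d P = MvPolynomial.coeff d Q := by
    intro d h1 h2
    have hd : d = indF d.support := by
      ext i
      rw [indF_apply]
      have := h1 i
      by_cases hi : i ∈ d.support
      · have : d i ≠ 0 := Finsupp.mem_support_iff.mp hi
        simp [hi]; omega
      · have : d i = 0 := by simpa using (Finsupp.notMem_support_iff.mp hi)
        simp [hi, this]
    have hsum : (d.sum fun _ e => e) = d.support.card := by
      rw [Finsupp.sum, Finset.card_eq_sum_ones]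
      refine Finset.sum_congr rfl fun i hi => ?_
      have h0 : d i ≠ 0 := Finsupp.mem_support_iff.mp hi
      have := h1 i
      omega
    have hcard : d.support.card ≤ D := by omega
    rw [hd]
    exact h d.support hcard
  apply MvPolynomial.ext
  intro d
  by_cases hP0 : MvPolynomial.coeff d P = 0
  · by_cases hQ0 : MvPolynomial.coeff d Q = 0
    · rw [hP0, hQ0]
    · have hdsupp : d ∈ Q.support := MvPolynomial.mem_support_iff.mpr hQ0
      exact main d (hQm d hdsupp) ((MvPolynomial.le_totalDegree hdsupp).trans hQd)
  · have hdsupp : d ∈ P.support := MvPolynomial.mem_support_iff.mpr hP0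
    exact main d (hPm d hdsupp) ((MvPolynomial.le_totalDegree hdsupp).trans hPd)

/-- Counting: few boolean functions admit a low-degree multilinear representation. -/
private lemma card_low_degree (n p D : ℕ) (hp : 1 < p) :
    Nat.card {f : (Fin n → Bool) → Bool //
      ∃ P : MvPolynomial (Fin n) (ZMod p), Multilinear P ∧ Represents P f ∧
        P.totalDegree ≤ D} ≤ p ^ ((D + 1) * (n + 1) ^ D) := by
  classical
  haveI : NeZero p := ⟨by omega⟩
  -- the injection into coefficient functions
  let F : {f : (Fin n → Bool) → Bool //
      ∃ P : MvPolynomial (Fin n) (ZMod p), Multilinear P ∧ Represents P f ∧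
        P.totalDegree ≤ D} → ({S : Finset (Fin n) // S.card ≤ D} → ZMod p) :=
    fun a => fun S => MvPolynomial.coeff (indF S.1) a.2.choose
  have hFinj : Function.Injective F := by
    intro a b hab
    have sa := a.2.choose_spec
    have sb := b.2.choose_spec
    have hPQ : a.2.choose = b.2.choose :=
      multilinear_ext sa.1 sb.1 sa.2.2 sb.2.2
        (fun S hS => congrFun hab ⟨S, hS⟩)
    have : a.1 = b.1 := represents_inj hp sa.2.1 (hPQ ▸ sb.2.1)
    exact Subtype.ext this
  have h1 : Nat.card {f : (Fin n → Bool) → Bool //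
      ∃ P : MvPolynomial (Fin n) (ZMod p), Multilinear P ∧ Represents P f ∧
        P.totalDegree ≤ D} ≤ Nat.card ({S : Finset (Fin n) // S.card ≤ D} → ZMod p) :=
    Nat.card_le_card_of_injective F hFinj
  have h2 : Nat.card ({S : Finset (Fin n) // S.card ≤ D} → ZMod p)
      = p ^ Fintype.card {S : Finset (Fin n) // S.card ≤ D} := by
    rw [Nat.card_eq_fintype_card, Fintype.card_fun, ZMod.card]
  have h3 : Fintype.card {S : Finset (Fin n) // S.card ≤ D} ≤ (D + 1) * (n + 1) ^ D := by
    rw [Fintype.card_subtype]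
    have hsub : (Finset.univ.filter fun S : Finset (Fin n) => S.card ≤ D) ⊆
        (Finset.range (D + 1)).biUnion (fun k => Finset.powersetCard k Finset.univ) := by
      intro S hS
      have hSc : S.card ≤ D := (Finset.mem_filter.mp hS).2
      exact Finset.mem_biUnion.mpr ⟨S.card, Finset.mem_range.mpr (by omega),
        Finset.mem_powersetCard.mpr ⟨Finset.subset_univ S, rfl⟩⟩
    calc (Finset.univ.filter fun S : Finset (Fin n) => S.card ≤ D).card
        ≤ ((Finset.range (D + 1)).biUnion
            (fun k => Finset.powersetCard k Finset.univ)).card := Finset.card_le_card hsub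
      _ ≤ ∑ k ∈ Finset.range (D + 1), (Finset.powersetCard k (Finset.univ : Finset (Fin n))).card :=
          Finset.card_biUnion_le
      _ ≤ ∑ _k ∈ Finset.range (D + 1), (n + 1) ^ D := by
          refine Finset.sum_le_sum fun k hk => ?_
          rw [Finset.card_powersetCard, Finset.card_univ, Fintype.card_fin]
          calc n.choose k ≤ n.descFactorial k := Nat.choose_le_descFactorial n k
            _ ≤ n ^ k := Nat.descFactorial_le_pow n k
            _ ≤ (n + 1) ^ k := Nat.pow_le_pow_left (by omega) k
            _ ≤ (n + 1) ^ D := Nat.pow_le_pow_right (by omega)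
                (by simpa using Nat.lt_succ_iff.mp (Finset.mem_range.mp hk))
      _ = (D + 1) * (n + 1) ^ D := by rw [Finset.sum_const, Finset.card_range, smul_eq_mul]
  calc Nat.card _ ≤ p ^ Fintype.card {S : Finset (Fin n) // S.card ≤ D} := h1.trans h2.le
    _ ≤ p ^ ((D + 1) * (n + 1) ^ D) := Nat.pow_le_pow_right (by omega) h3

/-- Every "bad" function admits a low-degree multilinear representation over `ℤ_p`. -/
private lemma bad_low {n p q : ℕ} (hp : p.Prime) (hq : q.Prime) (hn : 1 ≤ n)
    (f : (Fin n → Bool) → Bool)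
    (hf : ¬ ∀ dp dq : ℕ, RepDegree p f dp → RepDegree q f dq →
      Real.logb 2 n - 1 < ((p * q * dp * dq : ℕ) : ℝ)) :
    ∃ P : MvPolynomial (Fin n) (ZMod p), Multilinear P ∧ Represents P f ∧
      P.totalDegree ≤ Nat.log 2 n := by
  haveI : Fact (1 < q) := ⟨hq.one_lt⟩
  push_neg at hf
  obtain ⟨dp, dq, ⟨P, hPm, hPr, hPd⟩, ⟨Q, hQm, hQr, hQd⟩, hle⟩ := hf
  rcases Nat.eq_zero_or_pos dq with h0 | h1
  · -- `f` is constant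
    subst h0
    have hQ0 : ∀ m ∈ Q.support, ∀ x, m x = 0 :=
      (MvPolynomial.totalDegree_eq_zero_iff _ Q).mp hQd
    have hQC : Q = MvPolynomial.C (MvPolynomial.coeff 0 Q) := by
      apply MvPolynomial.ext
      intro m
      rw [MvPolynomial.coeff_C]
      split_ifs with h
      · rw [← h]
      · have : MvPolynomial.coeff m Q = 0 := by
          by_contra hm
          exact h (Finsupp.ext fun i => (hQ0 m (MvPolynomial.mem_support_iff.mpr hm) i).symm)
        exact this
    have hconst : ∀ x, f x = f (fun _ => false) := by
      intro x
      have hx := hQr x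
      have hy := hQr (fun _ => false)
      rw [hQC, MvPolynomial.eval_C] at hx hy
      have hxy : (if f x then (1 : ZMod q) else 0) = if f (fun _ => false) then 1 else 0 :=
        hx.symm.trans hy
      cases hfx : f x <;> cases hfy : f (fun _ => false) <;> rw [hfx, hfy] at hxy <;>
        simp at hxy
    refine ⟨MvPolynomial.C (if f (fun _ => false) then 1 else 0), ?_, ?_, ?_⟩
    · intro d hd i
      have hd0 : d = 0 := by
        by_contra hne
        have hc := MvPolynomial.mem_support_iff.mp hd
        rw [MvPolynomial.coeff_C, if_neg (fun h => hne h.symm)] at hc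
        exact hc rfl
      simp [hd0]
    · intro x
      rw [MvPolynomial.eval_C, hconst x]
    · rw [MvPolynomial.totalDegree_C]; exact Nat.zero_le _
  · -- dq ≥ 1
    refine ⟨P, hPm, hPr, ?_⟩
    rw [hPd]
    have hdp : dp ≤ p * q * dp * dq := by
      have h2 : 1 ≤ p * q * dq := Nat.one_le_iff_ne_zero.mpr (by
        have := hp.pos; have := hq.pos; positivity)
      calc dp = dp * 1 := (Nat.mul_one dp).symm
        _ ≤ dp * (p * q * dq) := Nat.mul_le_mul_left dp h2
        _ = p * q * dp * dq := by ring
    have h2 : (dp : ℝ) ≤ Real.logb 2 n := by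
      calc (dp : ℝ) ≤ ((p * q * dp * dq : ℕ) : ℝ) := by exact_mod_cast hdp
        _ ≤ Real.logb 2 n - 1 := hle
        _ ≤ Real.logb 2 n := by linarith
    have h3 : (2 : ℝ) ^ (dp : ℝ) ≤ (n : ℝ) :=
      (Real.le_logb_iff_rpow_le (by norm_num) (by exact_mod_cast hn)).mp h2
    rw [Real.rpow_natCast] at h3
    have h4 : 2 ^ dp ≤ n := by exact_mod_cast h3
    exact (Nat.le_log_iff_pow_le one_lt_two (by omega)).mpr h4

private lemma two_mul_sq_le_pow : ∀ L : ℕ, 7 ≤ L → 2 * (L + 1) ^ 2 ≤ 2 ^ L := by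
  intro L hL
  induction L, hL using Nat.le_induction with
  | base => norm_num
  | succ L hL ih =>
    calc 2 * (L + 1 + 1) ^ 2 ≤ 2 * (2 * (L + 1) ^ 2) := by nlinarith
      _ ≤ 2 * 2 ^ L := by omega
      _ = 2 ^ (L + 1) := by rw [pow_succ]; ring

private lemma nat_bound (p n : ℕ) (hp : 1 < p) (hn : 2 ^ (max p 7) ≤ n) :
    p ^ ((Nat.log 2 n + 1) * (n + 1) ^ (Nat.log 2 n)) * 2 ^ n ≤ 2 ^ (2 ^ n) := by
  set L := Nat.log 2 n with hLdef
  have hn0 : n ≠ 0 := by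
    have : (0:ℕ) < 2 ^ (max p 7) := Nat.two_pow_pos _
    omega
  have hL7 : max p 7 ≤ L := by
    have h := Nat.log_mono_right (b := 2) hn
    rwa [Nat.log_pow one_lt_two] at h
  have hpL : p ≤ L := le_trans (le_max_left _ _) hL7
  have h7L : 7 ≤ L := le_trans (le_max_right _ _) hL7
  have hnlt : n + 1 ≤ 2 ^ (L + 1) := Nat.lt_pow_succ_log_self one_lt_two n
  have hpow : 2 ^ L ≤ n := Nat.pow_log_le_self 2 hn0
  have hm : (L + 1) * (n + 1) ^ L ≤ 2 ^ ((L + 1) * (L + 1)) := by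
    have hL1 : L + 1 ≤ 2 ^ (L + 1) := by
      have := Nat.lt_two_pow_self (n := L + 1); omega
    calc (L + 1) * (n + 1) ^ L ≤ 2 ^ (L + 1) * (2 ^ (L + 1)) ^ L :=
        Nat.mul_le_mul hL1 (Nat.pow_le_pow_left hnlt L)
      _ = 2 ^ ((L + 1) + (L + 1) * L) := by rw [← pow_mul, ← pow_add]
      _ = 2 ^ ((L + 1) * (L + 1)) := by ring_nf
  have hexp : p * ((L + 1) * (n + 1) ^ L) ≤ 2 ^ (p + (L + 1) * (L + 1)) := by
    calc p * ((L + 1) * (n + 1) ^ L) ≤ 2 ^ p * 2 ^ ((L + 1) * (L + 1)) :=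
        Nat.mul_le_mul (Nat.le_of_lt (Nat.lt_two_pow_self (n := p))) hm
      _ = 2 ^ (p + (L + 1) * (L + 1)) := (pow_add 2 _ _).symm
  have harith : p + (L + 1) * (L + 1) ≤ n - 1 := by
    have h1 : p + (L + 1) * (L + 1) + 1 ≤ 2 * (L + 1) ^ 2 := by nlinarith
    have h2 := two_mul_sq_le_pow L h7L
    omega
  have hfin : p ^ ((L + 1) * (n + 1) ^ L) ≤ 2 ^ (2 ^ (n - 1)) := by
    calc p ^ ((L + 1) * (n + 1) ^ L)
        ≤ (2 ^ p) ^ ((L + 1) * (n + 1) ^ L) :=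
          Nat.pow_le_pow_left (Nat.le_of_lt (Nat.lt_two_pow_self (n := p))) _
      _ = 2 ^ (p * ((L + 1) * (n + 1) ^ L)) := by rw [← pow_mul]
      _ ≤ 2 ^ (2 ^ (p + (L + 1) * (L + 1))) := Nat.pow_le_pow_right (by norm_num) hexp
      _ ≤ 2 ^ (2 ^ (n - 1)) := Nat.pow_le_pow_right (by norm_num)
          (Nat.pow_le_pow_right (by norm_num) harith)
  have hn2 : n ≤ 2 ^ (n - 1) := by
    have h := Nat.lt_two_pow_self (n := n - 1)
    have : n - 1 + 1 = n := by omega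
    linarith [h]
  calc p ^ ((L + 1) * (n + 1) ^ L) * 2 ^ n
      ≤ 2 ^ (2 ^ (n - 1)) * 2 ^ (2 ^ (n - 1)) :=
        Nat.mul_le_mul hfin (Nat.pow_le_pow_right (by norm_num) hn2)
    _ = 2 ^ (2 ^ (n - 1) + 2 ^ (n - 1)) := (pow_add 2 _ _).symm
    _ = 2 ^ (2 ^ n) := by
        congr 1
        conv_rhs => rw [show n = (n - 1) + 1 by omega]
        rw [pow_succ]
        ring

/-- For fixed distinct primes `p, q`, the fraction of Boolean functions
`f : {0,1}^n → {0,1}` satisfying `p · q · d_p(f) · d_q(f) > log₂ n - 1` tends to `1`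
as `n → ∞`. -/
theorem almost_all_two_prime_degree_lower_bound (p q : ℕ)
    (hp : p.Prime) (hq : q.Prime) (hpq : p ≠ q) :
    Filter.Tendsto (fun n : ℕ =>
      (Nat.card {f : (Fin n → Bool) → Bool //
          ∀ dp dq : ℕ, RepDegree p f dp → RepDegree q f dq →
            Real.logb 2 n - 1 < ((p * q * dp * dq : ℕ) : ℝ)} : ℝ) / 2 ^ (2 ^ n))
      Filter.atTop (nhds 1) := by
  classical
  -- abbreviations
  set Good : ∀ n : ℕ, ((Fin n → Bool) → Bool) → Prop := fun n f =>
    ∀ dp dq : ℕ, RepDegree p f dp → RepDegree q f dq →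
      Real.logb 2 n - 1 < ((p * q * dp * dq : ℕ) : ℝ) with hGood
  have hsplit : ∀ n : ℕ,
      (Nat.card {f : (Fin n → Bool) → Bool // Good n f} : ℝ) / 2 ^ (2 ^ n)
        = 1 - (Nat.card {f : (Fin n → Bool) → Bool // ¬ Good n f} : ℝ) / 2 ^ (2 ^ n) := by
    intro n
    have htot : Fintype.card ((Fin n → Bool) → Bool) = 2 ^ (2 ^ n) := by
      simp [Fintype.card_fun]
    have hcompl := Fintype.card_subtype_compl (fun f : (Fin n → Bool) → Bool => Good n f)
    have hle := Fintype.card_subtype_le (fun f : (Fin n → Bool) → Bool => Good n f)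
    have hgc : Fintype.card {f : (Fin n → Bool) → Bool // Good n f}
        = 2 ^ (2 ^ n) - Fintype.card {f : (Fin n → Bool) → Bool // ¬ Good n f} := by
      omega
    have hble : Fintype.card {f : (Fin n → Bool) → Bool // ¬ Good n f} ≤ 2 ^ (2 ^ n) := by
      omega
    rw [Nat.card_eq_fintype_card, Nat.card_eq_fintype_card, hgc, Nat.cast_sub hble]
    push_cast
    rw [sub_div, div_self (by positivity)]
  have hbadzero : Filter.Tendsto (fun n : ℕ =>
      (Nat.card {f : (Fin n → Bool) → Bool // ¬ Good n f} : ℝ) / 2 ^ (2 ^ n))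
      Filter.atTop (nhds 0) := by
    apply squeeze_zero' (Filter.Eventually.of_forall fun n => by positivity)
    · -- eventual upper bound by (1/2)^n
      rw [Filter.eventually_atTop]
      refine ⟨2 ^ (max p 7), fun n hn => ?_⟩
      have hn1 : 1 ≤ n := le_trans (Nat.one_le_two_pow) hn
      set D := Nat.log 2 n with hD
      -- inject bad functions into low-degree representable ones
      have hinj : Nat.card {f : (Fin n → Bool) → Bool // ¬ Good n f}
          ≤ Nat.card {f : (Fin n → Bool) → Bool //
              ∃ P : MvPolynomial (Fin n) (ZMod p), Multilinear P ∧ Represents P f ∧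
                P.totalDegree ≤ D} := by
        exact Nat.card_le_card_of_injective
          (Subtype.map id fun f hf => bad_low hp hq hn1 f hf)
          (Subtype.map_injective _ Function.injective_id)
      have hcount := card_low_degree n p D hp.one_lt
      have hnat : Nat.card {f : (Fin n → Bool) → Bool // ¬ Good n f} * 2 ^ n ≤ 2 ^ (2 ^ n) :=
        le_trans (Nat.mul_le_mul_right _ (hinj.trans hcount)) (nat_bound p n hp.one_lt hn)
      have hreal : (Nat.card {f : (Fin n → Bool) → Bool // ¬ Good n f} : ℝ) * 2 ^ n
          ≤ 2 ^ (2 ^ n) := by exact_mod_cast hnat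
      rw [div_le_iff₀ (by positivity)]
      have heq : ((1 : ℝ) / 2) ^ n * 2 ^ (2 ^ n) = 2 ^ (2 ^ n) / 2 ^ n := by
        rw [one_div, inv_pow]; ring
      rw [heq, le_div_iff₀ (by positivity)]
      exact hreal
    · exact tendsto_pow_atTop_nhds_zero_of_lt_one (by norm_num) (by norm_num)
  have := (tendsto_const_nhds (x := (1:ℝ)) (f := Filter.atTop (α := ℕ))).sub hbadzero
  rw [sub_zero] at this
  exact Filter.Tendsto.congr (fun n => (hsplit n).symm) this
end
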